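/- Let (X_n) be the once-reinforced random walk with parameter δ ≥ 0 on G = ℤ × Γ, where Γ is a finite graph. Define M_n := x̄(X_n) + δ·Σ_{k=0}^{n−1} (x̄(X_{k+1}) − x̄(X_k))·1{{X_k, X_{k+1}} ∉ E_k}, where x̄ denotes the ℤ-coordinate and E_k is the set of undirected edges crossed by the walk up to time k. Then (M_n) is a martingale with respect to the natural filtration of the walk. -/

import Mathlib

open MeasureTheory Finset
open scoped ENNReal Classical

/-- The cylinder graph `ℤ × Γ`. -/
def cylGraph {W : Type*} (Γ : SimpleGraph W) : SimpleGraph (ℤ × W) where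
  Adj u v := (u.1 = v.1 ∧ Γ.Adj u.2 v.2) ∨ (u.2 = v.2 ∧ (v.1 = u.1 + 1 ∨ u.1 = v.1 + 1))
  symm := by
    constructor
    intro u v h
    rcases h with ⟨h1, h2⟩ | ⟨h1, h2⟩
    · exact Or.inl ⟨h1.symm, h2.symm⟩
    · exact Or.inr ⟨h1.symm, h2.symm⟩
  loopless := by
    constructor
    intro u h
    rcases h with ⟨_, h2⟩ | ⟨_, h2⟩
    · exact (Γ.ne_of_adj h2) rfl
    · rcases h2 with h | h <;> omega

/-- The undirected edge `{x, y}` has been crossed along the finite path `w`. -/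
def pathCrossed {V : Type*} {n : ℕ} (w : Fin (n+1) → V) (x y : V) : Prop :=
  ∃ k : Fin n, (w k.castSucc = x ∧ w k.succ = y) ∨ (w k.castSucc = y ∧ w k.succ = x)

/-- Once-reinforced weight of the edge from the endpoint of the path `w` to `y`:
`1 + δ` if `{w_last, y}` has been crossed by `w`, and `1` otherwise. -/
noncomputable def orrwWeight {V : Type*} {n : ℕ} (δ : ℝ) (w : Fin (n+1) → V) (y : V) : ℝ :=
  if pathCrossed w (w (Fin.last n)) y then 1 + δ else 1

/-- The undirected edge `{x, y}` has been crossed by the walk `X` (in either direction) up to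
time `n`. -/
def walkCrossed {V : Type*} {Ω : Type*} (X : ℕ → Ω → V) (ω : Ω) (n : ℕ) (x y : V) : Prop :=
  ∃ k : ℕ, 1 ≤ k ∧ k ≤ n ∧
    ((X (k-1) ω = x ∧ X k ω = y) ∨ (X (k-1) ω = y ∧ X k ω = x))

lemma crossed_iff {V Ω : Type*} (X : ℕ → Ω → V) (ω : Ω) (n : ℕ)
    (w : Fin (n+1) → V) (hw : ∀ k : Fin (n+1), X k ω = w k) (u v : V) :
    walkCrossed X ω n u v ↔ pathCrossed w u v := by
  constructor
  · rintro ⟨k, hk1, hk2, h⟩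
    refine ⟨⟨k-1, by omega⟩, ?_⟩
    have e1 : X (k-1) ω = w (Fin.castSucc ⟨k-1, by omega⟩) := by
      have := hw ⟨k-1, by omega⟩
      simpa [Fin.castSucc] using this
    have e2 : X k ω = w (Fin.succ ⟨k-1, by omega⟩) := by
      have := hw ⟨k, by omega⟩
      have e : (Fin.succ (⟨k-1, by omega⟩ : Fin n) : Fin (n+1)) = ⟨k, by omega⟩ := by
        ext; simp; omega
      rw [e]; simpa using this
    rw [← e1, ← e2]; exact h
  · rintro ⟨j, h⟩
    refine ⟨j.val + 1, by omega, by omega, ?_⟩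
    have e1 : X (j.val + 1 - 1) ω = w j.castSucc := by
      have := hw j.castSucc
      simpa using this
    have e2 : X (j.val + 1) ω = w j.succ := by
      have := hw j.succ
      simpa using this
    rw [e1, e2]; exact h

/-- **Vervoort's martingale.** For the once-reinforced random walk `X` with parameter `δ ≥ 0`
on `ℤ × Γ`, the process
`M n = x̄(X n) + δ·Σ_{k<n} (x̄(X_{k+1}) - x̄(X_k))·1{the edge {X_k, X_{k+1}} was not yet crossed}`
is a martingale for the natural filtration of the walk: the increment `M (n+1) - M n` has zero
integral on every cylinder event of the first `n+1` positions. -/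
theorem stmt11 {W : Type*} [Fintype W] [Nonempty W] [MeasurableSpace W]
    [MeasurableSingletonClass W]
    (Γ : SimpleGraph W) (hΓ : Γ.Connected)
    (δ : ℝ) (hδ : 0 ≤ δ)
    {Ω : Type*} [MeasurableSpace Ω] (μ : Measure Ω) [IsProbabilityMeasure μ]
    (X : ℕ → Ω → ℤ × W) (hmeas : ∀ n, Measurable (X n))
    (a : ℤ × W) (h0 : ∀ ω, X 0 ω = a)
    (hwalk : ∀ (n : ℕ) (w : Fin (n+1) → ℤ × W) (y : ℤ × W),
      μ {ω | (∀ k : Fin (n+1), X k ω = w k) ∧ X (n+1) ω = y}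
        = μ {ω | ∀ k : Fin (n+1), X k ω = w k}
          * ENNReal.ofReal
            ((if (cylGraph Γ).Adj (w (Fin.last n)) y then orrwWeight δ w y else 0)
              / ((∑ γ ∈ Finset.univ.filter (fun γ => Γ.Adj (w (Fin.last n)).2 γ),
                    orrwWeight δ w ((w (Fin.last n)).1, γ))
                  + orrwWeight δ w ((w (Fin.last n)).1 - 1, (w (Fin.last n)).2)
                  + orrwWeight δ w ((w (Fin.last n)).1 + 1, (w (Fin.last n)).2)))) :
    ∀ (n : ℕ) (w : Fin (n+1) → ℤ × W),
      ∫ ω in {ω | ∀ k : Fin (n+1), X k ω = w k},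
        ((((X (n+1) ω).1 : ℝ) + δ * ∑ k ∈ Finset.range (n+1),
            (((X (k+1) ω).1 - (X k ω).1 : ℤ) : ℝ) *
              (if walkCrossed X ω k (X k ω) (X (k+1) ω) then 0 else 1))
          - (((X n ω).1 : ℝ) + δ * ∑ k ∈ Finset.range n,
            (((X (k+1) ω).1 - (X k ω).1 : ℤ) : ℝ) *
              (if walkCrossed X ω k (X k ω) (X (k+1) ω) then 0 else 1))) ∂μ = 0 := by
  intro n w
  set x : ℤ × W := w (Fin.last n) with hx
  set A : Set Ω := {ω | ∀ k : Fin (n+1), X k ω = w k} with hA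
  have hAmeas : MeasurableSet A := by
    have : A = ⋂ k : Fin (n+1), (X k) ⁻¹' {w k} := by
      ext ω; simp [hA, Set.mem_iInter, Set.mem_preimage]
    rw [this]
    exact MeasurableSet.iInter fun k => (hmeas k) (measurableSet_singleton _)
  set D : ℝ := (∑ γ ∈ Finset.univ.filter (fun γ => Γ.Adj x.2 γ), orrwWeight δ w (x.1, γ))
      + orrwWeight δ w (x.1 - 1, x.2) + orrwWeight δ w (x.1 + 1, x.2) with hD
  have hw1 : ∀ y : ℤ × W, (1:ℝ) ≤ orrwWeight δ w y := by
    intro y; unfold orrwWeight; split <;> linarith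
  have hw0 : ∀ y : ℤ × W, (0:ℝ) ≤ orrwWeight δ w y :=
    fun y => le_trans zero_le_one (hw1 y)
  have hDpos : 0 < D := by
    have h1 : (0:ℝ) ≤ ∑ γ ∈ Finset.univ.filter (fun γ => Γ.Adj x.2 γ),
        orrwWeight δ w (x.1, γ) := Finset.sum_nonneg fun γ _ => hw0 _
    have h2 := hw1 (x.1 - 1, x.2)
    have h3 := hw1 (x.1 + 1, x.2)
    rw [hD]; linarith
  set Ay : ℤ × W → Set Ω := fun y => {ω | (∀ k : Fin (n+1), X k ω = w k) ∧ X (n+1) ω = y}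
    with hAy
  have hAysub : ∀ y, Ay y ⊆ A := fun y ω hω => hω.1
  have hAymeas : ∀ y, MeasurableSet (Ay y) := by
    intro y
    have : Ay y = A ∩ (X (n+1)) ⁻¹' {y} := by
      ext ω; simp [hAy, hA, Set.mem_inter_iff]
    rw [this]
    exact hAmeas.inter ((hmeas (n+1)) (measurableSet_singleton _))
  set r : ℤ × W → ℝ :=
    fun y => (if (cylGraph Γ).Adj x y then orrwWeight δ w y else 0) / D with hr
  have hr0 : ∀ y, 0 ≤ r y := by
    intro y
    apply div_nonneg _ hDpos.le
    split
    · exact hw0 _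
    · exact le_rfl
  have hμAy : ∀ y, μ (Ay y) = μ A * ENNReal.ofReal (r y) := by
    intro y
    have := hwalk n w y
    rw [← hx] at this
    exact this
  set N : Finset (ℤ × W) := insert (x.1 - 1, x.2) (insert (x.1 + 1, x.2)
      ((Finset.univ.filter fun γ => Γ.Adj x.2 γ).image fun γ => (x.1, γ))) with hN
  have hadjN : ∀ y : ℤ × W, (cylGraph Γ).Adj x y → y ∈ N := by
    intro y hy
    rcases hy with ⟨h1, h2⟩ | ⟨h1, h2⟩
    · apply Finset.mem_insert_of_mem; apply Finset.mem_insert_of_mem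
      refine Finset.mem_image.2 ⟨y.2, Finset.mem_filter.2 ⟨Finset.mem_univ _, h2⟩, ?_⟩
      exact Prod.ext h1 rfl
    · rcases h2 with h2 | h2
      · apply Finset.mem_insert_of_mem
        apply Finset.mem_insert.2; left
        exact Prod.ext (by omega) h1.symm
      · apply Finset.mem_insert.2; left
        exact Prod.ext (by omega) h1.symm
  have hnull : ∀ y ∉ N, μ (Ay y) = 0 := by
    intro y hy
    rw [hμAy y]
    have : r y = 0 := by
      rw [hr]
      simp only []
      rw [if_neg (fun h => hy (hadjN y h)), zero_div]
    rw [this, ENNReal.ofReal_zero, mul_zero]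
  set B : Set Ω := ⋃ y ∈ N, Ay y with hB
  have hBA : B ⊆ A := by
    intro ω hω
    simp only [hB, Set.mem_iUnion] at hω
    obtain ⟨y, _, hy⟩ := hω
    exact hAysub y hy
  have hABnull : μ (A \ B) = 0 := by
    have hsub : A \ B ⊆ ⋃ y ∈ (↑N : Set (ℤ × W))ᶜ, Ay y := by
      intro ω hω
      obtain ⟨hωA, hωB⟩ := hω
      have hmemAy : ω ∈ Ay (X (n+1) ω) := ⟨hωA, rfl⟩
      have hXn : X (n+1) ω ∉ N := by
        intro hmem
        exact hωB (Set.mem_biUnion hmem hmemAy)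
      exact Set.mem_biUnion hXn hmemAy
    refine measure_mono_null hsub ?_
    rw [measure_biUnion_null_iff (Set.to_countable _)]
    intro y hy
    exact hnull y hy
  have hAeqB : A =ᵐ[μ] B :=
    ae_eq_set.2 ⟨hABnull, by rw [Set.diff_eq_empty.2 hBA]; exact measure_empty⟩
  set F : ℤ × W → ℝ := fun y =>
    ((y.1 - x.1 : ℤ) : ℝ) * (1 + δ * (if pathCrossed w x y then 0 else 1)) with hF
  set g : Ω → ℝ := fun ω =>
    ((((X (n+1) ω).1 : ℝ) + δ * ∑ k ∈ Finset.range (n+1),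
            (((X (k+1) ω).1 - (X k ω).1 : ℤ) : ℝ) *
              (if walkCrossed X ω k (X k ω) (X (k+1) ω) then 0 else 1))
          - (((X n ω).1 : ℝ) + δ * ∑ k ∈ Finset.range n,
            (((X (k+1) ω).1 - (X k ω).1 : ℤ) : ℝ) *
              (if walkCrossed X ω k (X k ω) (X (k+1) ω) then 0 else 1))) with hg
  have hpt : ∀ y : ℤ × W, ∀ ω ∈ Ay y, g ω = F y := by
    intro y ω hω
    obtain ⟨hωw, hωy⟩ := hω
    have hXn : X n ω = x := by
      have := hωw (Fin.last n)
      rw [hx]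
      simpa [Fin.last] using this
    have hcr : walkCrossed X ω n (X n ω) (X (n+1) ω) ↔ pathCrossed w x y := by
      rw [hXn, hωy]
      exact crossed_iff X ω n w hωw x y
    rw [hg]
    simp only [Finset.sum_range_succ]
    rw [hF]
    have : (if walkCrossed X ω n (X n ω) (X (n+1) ω) then (0:ℝ) else 1)
        = (if pathCrossed w x y then (0:ℝ) else 1) := by
      by_cases h : pathCrossed w x y
      · rw [if_pos (hcr.2 h), if_pos h]
      · rw [if_neg (fun hh => h (hcr.1 hh)), if_neg h]
    rw [this, hXn, hωy]
    push_cast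
    ring
  have hdisj : (↑N : Set (ℤ × W)).Pairwise (Function.onFun Disjoint Ay) := by
    intro y1 _ y2 _ hne
    apply Set.disjoint_left.2
    intro ω h1 h2
    exact hne (h1.2 ▸ h2.2 ▸ rfl)
  have hint : ∀ y ∈ N, IntegrableOn g (Ay y) μ := by
    intro y _
    have hc : IntegrableOn (fun _ => F y) (Ay y) μ :=
      integrableOn_const (measure_ne_top μ _)
    exact hc.congr_fun (fun ω hω => (hpt y ω hω).symm) (hAymeas y)
  calc ∫ ω in A, g ω ∂μ = ∫ ω in B, g ω ∂μ := setIntegral_congr_set hAeqB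
    _ = ∑ y ∈ N, ∫ ω in Ay y, g ω ∂μ :=
        integral_biUnion_finset N (fun y _ => hAymeas y) hdisj hint
    _ = ∑ y ∈ N, (μ A).toReal * (r y * F y) := by
        refine Finset.sum_congr rfl fun y _ => ?_
        rw [setIntegral_congr_fun (hAymeas y) (hpt y), setIntegral_const, measureReal_def,
          hμAy y, ENNReal.toReal_mul, ENNReal.toReal_ofReal (hr0 y), smul_eq_mul]
        ring
    _ = (μ A).toReal * ∑ y ∈ N, r y * F y := by rw [Finset.mul_sum]
    _ = 0 := by
        have hsum : ∑ y ∈ N, r y * F y = 0 := by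
          rw [hN]
          have hm1 : (x.1 - 1, x.2) ∉ insert (x.1 + 1, x.2)
              ((Finset.univ.filter fun γ => Γ.Adj x.2 γ).image fun γ => (x.1, γ)) := by
            simp only [Finset.mem_insert, Finset.mem_image, Finset.mem_filter,
              Prod.mk.injEq, Prod.ext_iff]
            push_neg
            constructor
            · intro h; omega
            · intro γ _ h; omega
          have hm2 : (x.1 + 1, x.2) ∉
              ((Finset.univ.filter fun γ => Γ.Adj x.2 γ).image fun γ => (x.1, γ)) := by
            simp only [Finset.mem_image, Finset.mem_filter, Prod.mk.injEq]
            push_neg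
            intro γ _ h; omega
          rw [Finset.sum_insert hm1, Finset.sum_insert hm2]
          have hzero : ∑ y ∈ ((Finset.univ.filter fun γ => Γ.Adj x.2 γ).image
              fun γ => (x.1, γ)), r y * F y = 0 := by
            apply Finset.sum_eq_zero
            intro y hy
            obtain ⟨γ, _, hyeq⟩ := Finset.mem_image.1 hy
            have : F y = 0 := by
              rw [hF, ← hyeq]
              simp
            rw [this, mul_zero]
          rw [hzero, add_zero]
          have hadjL : (cylGraph Γ).Adj x (x.1 - 1, x.2) :=
            Or.inr ⟨rfl, Or.inr (by ring)⟩
          have hadjR : (cylGraph Γ).Adj x (x.1 + 1, x.2) :=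
            Or.inr ⟨rfl, Or.inl rfl⟩
          have hL : r (x.1 - 1, x.2) * F (x.1 - 1, x.2) = -(1 + δ) / D := by
            rw [hr, hF]
            simp only [if_pos hadjL]
            have hFv : ((x.1 - 1 - x.1 : ℤ) : ℝ) = -1 := by push_cast; ring
            rw [hFv]
            unfold orrwWeight
            rw [← hx]
            by_cases h : pathCrossed w x (x.1 - 1, x.2)
            · simp only [if_pos h]
              field_simp
              ring
            · simp only [if_neg h]
              field_simp
          have hR : r (x.1 + 1, x.2) * F (x.1 + 1, x.2) = (1 + δ) / D := by
            rw [hr, hF]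
            simp only [if_pos hadjR]
            have hFv : ((x.1 + 1 - x.1 : ℤ) : ℝ) = 1 := by push_cast; ring
            rw [hFv]
            unfold orrwWeight
            rw [← hx]
            by_cases h : pathCrossed w x (x.1 + 1, x.2)
            · simp only [if_pos h]
              field_simp
              ring
            · simp only [if_neg h]
              field_simp
          rw [hL, hR]
          ring
        rw [hsum, mul_zero]
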